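/- For every n ∈ ℕ and every n-ary Boolean function f : Bool^n → Bool, there exists an instruction sequence X ∈ IS_br^na in which no forward jump instruction other than #2 occurs, such that X computes f and psize(X) ≤ c·(n·2^n + 1), where c is a constant independent of n and f. -/

import Mathlib

/-- Boolean register names: `inp i` is input register `in:(i+1)`,
`aux i` is auxiliary register `aux:(i+1)`, `out` is the output register. -/
inductive Reg where
  | inp : ℕ → Reg
  | aux : ℕ → Reg
  | out : Reg
deriving DecidableEq

/-- Basic instructions: register reads/writes, and (for splitting instruction
sequences) `split p` and `reply p` for Boolean parameters `p`. -/
inductive BInstr where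
  | get : Reg → BInstr
  | set : Reg → Bool → BInstr
  | split : ℕ → BInstr
  | reply : ℕ → BInstr
deriving DecidableEq

/-- Primitive instructions. -/
inductive PInstr where
  | plain : BInstr → PInstr
  | pos : BInstr → PInstr
  | neg : BInstr → PInstr
  | jump : ℕ → PInstr
  | halt : PInstr
deriving DecidableEq

abbrev RegState := Reg → Bool

/-- State change caused by processing a basic instruction. -/
def BInstr.effect : BInstr → RegState → RegState
  | .set r b, s => Function.update s r b
  | _, s => s

/-- Reply produced by processing a basic instruction. -/
def BInstr.rpl : BInstr → RegState → Bool
  | .get r, s => s r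
  | .set _ b, _ => b
  | _, _ => false

def BInstr.isSplitReply : BInstr → Bool
  | .split _ => true
  | .reply _ => true
  | _ => false

/-- Single-thread execution of an instruction sequence on Boolean registers;
`none` means deadlock, `some s` means termination in register state `s`.
(`split`/`reply` instructions make no sense here and deadlock.) -/
def exec : List PInstr → RegState → Option RegState
  | [], _ => none
  | .plain a :: X, s =>
      if a.isSplitReply then none else exec X (a.effect s)
  | .pos a :: X, s =>
      if a.isSplitReply then none
      else if a.rpl s then exec X (a.effect s) else exec (X.drop 1) (a.effect s)
  | .neg a :: X, s =>
      if a.isSplitReply then none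
      else if a.rpl s then exec (X.drop 1) (a.effect s) else exec X (a.effect s)
  | .jump 0 :: _, _ => none
  | .jump (l+1) :: X, s => exec (X.drop l) s
  | .halt :: _, s => some s
termination_by X _ => X.length
decreasing_by all_goals (simp only [List.length_drop, List.length_cons]; omega)

/-- Initial register state: input registers `in:1 .. in:n` contain
`b 0, ..., b (n-1)`; all other registers contain `false`. -/
def initState (n : ℕ) (b : Fin n → Bool) : RegState := fun r =>
  match r with
  | .inp i => if h : i < n then b ⟨i, h⟩ else false
  | _ => false

/-- `X` computes the `n`-ary Boolean function `f`: for every input, execution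
terminates (does not deadlock) with the output register containing `f b`. -/
def Computes {n : ℕ} (f : (Fin n → Bool) → Bool) (X : List PInstr) : Prop :=
  ∀ b : Fin n → Bool, ∃ s : RegState,
    exec X (initState n b) = some s ∧ s Reg.out = f b

/-- Basic instructions allowed in `IS_br`. -/
def BrBasic : BInstr → Prop
  | .get (.inp _) => True
  | .get (.aux _) => True
  | .set (.aux _) _ => True
  | .set .out _ => True
  | _ => False

/-- Basic instructions allowed in `IS_br^na`. -/
def NaBasic : BInstr → Prop
  | .get (.inp _) => True
  | .set .out _ => True
  | _ => False

def InstrBasicOK (P : BInstr → Prop) : PInstr → Prop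
  | .plain a => P a
  | .pos a => P a
  | .neg a => P a
  | _ => True

/-- Membership of `IS_br` (non-empty, only allowed basic instructions). -/
def ISbr (X : List PInstr) : Prop :=
  X ≠ [] ∧ ∀ u ∈ X, InstrBasicOK BrBasic u

/-- Membership of `IS_br^na`. -/
def ISbrna (X : List PInstr) : Prop :=
  X ≠ [] ∧ ∀ u ∈ X, InstrBasicOK NaBasic u

/-- The primitive instruction contains the basic instruction `out.set:false`. -/
def UsesOutSetFalse : PInstr → Prop
  | .plain (.set .out false) => True
  | .pos (.set .out false) => True
  | .neg (.set .out false) => True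
  | _ => False

/-- The class PLIS of Boolean function families computable by
polynomial-length instruction sequences from `IS_br`. -/
def PLIS (F : (n : ℕ) → (Fin n → Bool) → Bool) : Prop :=
  ∃ h : Polynomial ℕ, ∀ n : ℕ, ∃ X : List PInstr,
    ISbr X ∧ Computes (F n) X ∧ X.length ≤ h.eval n

/-! Auxiliary construction for Theorem 1. -/

/-- Test instruction for input register `i` against value `b`:
on a match, it skips the next instruction; on a mismatch it proceeds. -/
def tst (i : ℕ) (b : Bool) : PInstr :=
  if b then .neg (.get (.inp i)) else .pos (.get (.inp i))

/-- Block testing a list of (register, value) pairs; if all match, sets `out`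
to `c`; either way control passes just beyond the block. -/
def blockAux : List (ℕ × Bool) → Bool → List PInstr
  | [], c => [.plain (.set .out c)]
  | (i, b) :: t, c => tst i b :: .jump 2 :: blockAux t c

lemma hop (L : List (ℕ × Bool)) (c : Bool) (Y : List PInstr) (s : RegState) :
    exec (.jump 2 :: (blockAux L c ++ Y)) s = exec Y s := by
  induction L with
  | nil => simp [blockAux, exec]
  | cons p t ih => obtain ⟨i, b⟩ := p; simpa [blockAux, exec] using ih

lemma block_exec (L : List (ℕ × Bool)) (c : Bool) (Y : List PInstr) (s : RegState) :
    exec (blockAux L c ++ Y) s =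
      exec Y (if ∀ p ∈ L, s (Reg.inp p.1) = p.2 then Function.update s .out c else s) := by
  induction L generalizing s with
  | nil => simp [blockAux, exec, BInstr.effect, BInstr.isSplitReply]
  | cons p t ih =>
    obtain ⟨i, b⟩ := p
    cases b <;> cases h : s (Reg.inp i) <;>
      simp [blockAux, tst, exec, BInstr.effect, BInstr.rpl, BInstr.isSplitReply, h, hop, ih, List.forall_mem_cons] <;>
      exact congrArg (exec Y) (if_congr (by simp [h]) rfl rfl).symm

/-- The pairs tested by the block for pattern `v`. -/
def pairs (n : ℕ) (v : Fin n → Bool) : List (ℕ × Bool) :=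
  (List.finRange n).map (fun i => (i.1, v i))

/-- The block for pattern `v`. -/
def blk (n : ℕ) (f : (Fin n → Bool) → Bool) (v : Fin n → Bool) : List PInstr :=
  blockAux (pairs n v) (f v)

lemma blockAux_length (L : List (ℕ × Bool)) (c : Bool) :
    (blockAux L c).length = 2 * L.length + 1 := by
  induction L with
  | nil => rfl
  | cons p t ih => obtain ⟨i, b⟩ := p; simp [blockAux, ih]; omega

lemma blockAux_mem (L : List (ℕ × Bool)) (c : Bool) (u : PInstr) (hu : u ∈ blockAux L c) :
    InstrBasicOK NaBasic u ∧ ∀ l : ℕ, u = .jump l → l = 2 := by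
  induction L with
  | nil =>
    simp only [blockAux, List.mem_singleton] at hu
    subst hu; exact ⟨trivial, by intro l h; cases h⟩
  | cons p t ih =>
    obtain ⟨i, b⟩ := p
    simp only [blockAux, List.mem_cons] at hu
    rcases hu with h | h | h
    · subst h; cases b <;>
        exact ⟨trivial, by intro l h; cases h⟩
    · subst h; exact ⟨trivial, by intro l h; cases h; rfl⟩
    · exact ih h

lemma chain_exec (n : ℕ) (f : (Fin n → Bool) → Bool) (vs : List (Fin n → Bool))
    (s : RegState) :
    exec ((vs.flatMap (blk n f)) ++ [.halt]) s =
      some (vs.foldl (fun t v =>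
        if ∀ p ∈ pairs n v, t (Reg.inp p.1) = p.2 then Function.update t .out (f v) else t) s) := by
  induction vs generalizing s with
  | nil => simp [exec]
  | cons v vs ih =>
    rw [List.flatMap_cons, List.append_assoc, blk, block_exec, ih]
    simp

lemma match_iff (n : ℕ) (b v : Fin n → Bool) (s : RegState)
    (hs : ∀ i : Fin n, s (Reg.inp i.1) = b i) :
    (∀ p ∈ pairs n v, s (Reg.inp p.1) = p.2) ↔ v = b := by
  simp only [pairs, List.mem_map, List.mem_finRange, forall_exists_index]
  constructor
  · intro h
    funext i
    have := h (i.1, v i) i ⟨trivial, rfl⟩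
    rw [hs i] at this; exact this.symm
  · rintro rfl p i ⟨-, rfl⟩
    exact hs i

lemma fold_eval (n : ℕ) (f : (Fin n → Bool) → Bool) (b : Fin n → Bool)
    (vs : List (Fin n → Bool)) :
    ∀ s : RegState, (∀ i : Fin n, s (Reg.inp i.1) = b i) →
      vs.foldl (fun t v =>
        if ∀ p ∈ pairs n v, t (Reg.inp p.1) = p.2 then Function.update t .out (f v) else t) s
        = if b ∈ vs then Function.update s .out (f b) else s := by
  induction vs with
  | nil => intro s _; simp
  | cons v vs ih =>
    intro s hs
    by_cases hv : v = b
    · subst hv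
      rw [List.foldl_cons, if_pos ((match_iff n v v s hs).mpr rfl)]
      have hs' : ∀ i : Fin n, (Function.update s .out (f v)) (Reg.inp i.1) = v i := by
        intro i; rw [Function.update_of_ne (by simp) _ s]; exact hs i
      rw [ih _ hs']
      simp [Function.update_idem]
    · rw [List.foldl_cons, if_neg (fun h => hv ((match_iff n b v s hs).mp h)), ih s hs]
      have hb : ¬ b = v := fun h => hv h.symm
      simp [List.mem_cons, hb]

/-- Theorem 1 of the paper: every `n`-ary Boolean function is computed by an
instruction sequence from `IS_br^na` of length `O(n · 2^n)` containing no
jump instruction other than `#2`. -/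
theorem statement0 :
    ∃ c : ℕ, ∀ (n : ℕ) (f : (Fin n → Bool) → Bool),
      ∃ X : List PInstr, ISbrna X ∧
        (∀ l : ℕ, PInstr.jump l ∈ X → l = 2) ∧
        Computes f X ∧ X.length ≤ c * (n * 2 ^ n + 1) := by
  refine ⟨3, fun n f => ?_⟩
  set vs := (Finset.univ : Finset (Fin n → Bool)).toList with hvs
  refine ⟨(vs.flatMap (blk n f)) ++ [.halt], ⟨by simp, ?_⟩, ?_, ?_, ?_⟩
  · intro u hu
    rcases List.mem_append.mp hu with h | h
    · rcases List.mem_flatMap.mp h with ⟨v, -, h⟩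
      exact (blockAux_mem _ _ _ h).1
    · simp only [List.mem_singleton] at h; subst h; trivial
  · intro l hl
    rcases List.mem_append.mp hl with h | h
    · rcases List.mem_flatMap.mp h with ⟨v, -, h⟩
      exact (blockAux_mem _ _ _ h).2 l rfl
    · simp at h
  · intro b
    have hs : ∀ i : Fin n, (initState n b) (Reg.inp i.1) = b i := by
      intro i; simp [initState, i.2]
    have hb : b ∈ vs := by simp [hvs]
    rw [chain_exec, fold_eval n f b vs _ hs, if_pos hb]
    exact ⟨_, rfl, Function.update_self _ _ _⟩
  · have h1 : (vs.flatMap (blk n f)).length = vs.length * (2 * n + 1) := by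
      rw [List.length_flatMap]
      have : ∀ v : Fin n → Bool, (blk n f v).length = 2 * n + 1 := by
        intro v; rw [blk, blockAux_length]; simp [pairs]
      rw [List.map_congr_left (fun v _ => this v)]
      simp [List.map_const', mul_comm]
    have h2 : vs.length = 2 ^ n := by
      simp [hvs]
    rw [List.length_append, h1, h2]
    have h4 : 2 ^ n ≤ n * 2 ^ n + 2 := by
      cases n with
      | zero => simp
      | succ m =>
        have h5 : 2 ^ (m + 1) ≤ (m + 1) * 2 ^ (m + 1) :=
          Nat.le_mul_of_pos_left _ (Nat.succ_pos m)
        omega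
    simp only [List.length_singleton]
    nlinarith [h4]
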